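/- The map F of the previous construction is compatible with conjugations: defining the *-operation on the abstract generators by (L_{kl})* = L_{lk}, (M_{kl})* = N_{lk}, (N_{kl})* = M_{lk}, (R_{kl})* = R_{lk}, and on gl(2N,ℂ) by A* := −𝟙_{(N,N)} A† 𝟙_{(N,N)}, where 𝟙_{(N,N)} = diag(𝟙_N, −𝟙_N) and † is conjugate transpose, one has F(X*) = F(X)* for every generator X among L_{kl}, M_{kl}, N_{kl}, R_{kl}. -/

import Mathlib

open Matrix Complex

noncomputable section

def Ekl (N : ℕ) (k l : Fin N) : Matrix (Fin N) (Fin N) ℂ := Matrix.single k l 1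

def FL (N : ℕ) (k l : Fin N) : Matrix (Fin N ⊕ Fin N) (Fin N ⊕ Fin N) ℂ :=
  I⁻¹ • fromBlocks (-(Ekl N k l)) (I • Ekl N k l) (I • Ekl N k l) (Ekl N k l)

def FM (N : ℕ) (ℏ : ℝ) (k l : Fin N) : Matrix (Fin N ⊕ Fin N) (Fin N ⊕ Fin N) ℂ :=
  ((ℏ : ℂ) / I) • fromBlocks (-(I • Ekl N k l)) (Ekl N k l) (-(Ekl N k l)) (-(I • Ekl N k l))

def FNg (N : ℕ) (ℏ : ℝ) (k l : Fin N) : Matrix (Fin N ⊕ Fin N) (Fin N ⊕ Fin N) ℂ :=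
  ((ℏ : ℂ) / I) • fromBlocks (I • Ekl N k l) (Ekl N k l) (-(Ekl N k l)) (I • Ekl N k l)

def FR (N : ℕ) (ℏ : ℝ) (k l : Fin N) : Matrix (Fin N ⊕ Fin N) (Fin N ⊕ Fin N) ℂ :=
  ((ℏ : ℂ) ^ 2 / I) • fromBlocks (-(Ekl N k l)) (-(I • Ekl N k l)) (-(I • Ekl N k l)) (Ekl N k l)

/-- The signature matrix `𝟙_{(N,N)} = diag(𝟙_N, −𝟙_N)`. -/
def Jmat (N : ℕ) : Matrix (Fin N ⊕ Fin N) (Fin N ⊕ Fin N) ℂ :=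
  fromBlocks 1 0 0 (-1)

/-- The conjugation `A* := −𝟙_{(N,N)} A† 𝟙_{(N,N)}` on `gl(2N,ℂ)`. -/
def starOp (N : ℕ) (A : Matrix (Fin N ⊕ Fin N) (Fin N ⊕ Fin N) ℂ) :
    Matrix (Fin N ⊕ Fin N) (Fin N ⊕ Fin N) ℂ :=
  -(Jmat N * Aᴴ * Jmat N)

lemma Ekl_conjT (N : ℕ) (k l : Fin N) : (Ekl N k l)ᴴ = Ekl N l k := by
  ext i j
  simp [Ekl, conjTranspose_apply, Matrix.single, and_comm]

lemma starOp_fromBlocks (N : ℕ) (A B C D : Matrix (Fin N) (Fin N) ℂ) :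
    starOp N (fromBlocks A B C D) = fromBlocks (-Aᴴ) Cᴴ Bᴴ (-Dᴴ) := by
  simp [starOp, Jmat, fromBlocks_conjTranspose, fromBlocks_multiply, fromBlocks_neg]

lemma starOp_smul (N : ℕ) (c : ℂ) (A : Matrix (Fin N ⊕ Fin N) (Fin N ⊕ Fin N) ℂ) :
    starOp N (c • A) = (starRingEnd ℂ) c • starOp N A := by
  simp [starOp, conjTranspose_smul, Matrix.mul_smul, Matrix.smul_mul]

/-- `F` is compatible with the conjugations: `F(X*) = F(X)*` for each generator,
where `(L_{kl})* = L_{lk}`, `(M_{kl})* = N_{lk}`, `(N_{kl})* = M_{lk}`, `(R_{kl})* = R_{lk}`. -/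
theorem stmt1 (N : ℕ) (ℏ : ℝ) (hℏ : 0 < ℏ) (k l : Fin N) :
    starOp N (FL N k l) = FL N l k ∧
    starOp N (FM N ℏ k l) = FNg N ℏ l k ∧
    starOp N (FNg N ℏ k l) = FM N ℏ l k ∧
    starOp N (FR N ℏ k l) = FR N ℏ l k := by
  refine ⟨?_, ?_, ?_, ?_⟩ <;>
  · simp only [FL, FM, FNg, FR, starOp_smul, starOp_fromBlocks, conjTranspose_neg,
      conjTranspose_smul, Ekl_conjT, map_inv₀, Complex.conj_I, map_div₀, map_pow,
      Complex.conj_ofReal, neg_neg, smul_neg, star_smul]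
    ext (i|i) (j|j) <;>
      simp [fromBlocks, Complex.ext_iff, smul_smul, div_mul_eq_mul_div, Ekl] <;> ring_nf <;>
      simp [Complex.ext_iff] <;> constructor <;> ring

end
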